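/- Let R be a Dedekind domain with finite class group G and let x be an irreducible element with (x) = 𝔭₁^{t₁}⋯𝔭_k^{t_k} for distinct prime ideals 𝔭ᵢ. Then ω(x) ≤ t₁ + ⋯ + t_k ≤ D(G), where D(G) is the Davenport constant. -/

import Mathlib

/-- The Davenport constant of a commutative group `G`: the supremum of lengths of
minimal zero-(product-one-)sequences over `G`. -/
noncomputable def davenportConstant (G : Type*) [CommGroup G] : ℕ :=
  sSup {n : ℕ | ∃ g : Fin n → G, ∏ i, g i = 1 ∧
    ∀ S : Finset (Fin n), S.Nonempty → S ≠ Finset.univ → ∏ i ∈ S, g i ≠ 1}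

section Aux

open UniqueFactorizationMonoid

/-- Greedy selection: from a family with total weight at least `t`, select at most `t`
indices carrying total weight at least `t`. -/
lemma exists_subset_card_le_sum {ι : Type*} (s : Finset ι) (m : ι → ℕ) (t : ℕ)
    (h : t ≤ ∑ j ∈ s, m j) :
    ∃ T ⊆ s, T.card ≤ t ∧ t ≤ ∑ j ∈ T, m j := by
  classical
  induction s using Finset.induction generalizing t with
  | empty =>
    exact ⟨∅, le_refl _, by simpa using h, by simpa using h⟩
  | @insert a s ha ih =>
    rw [Finset.sum_insert ha] at h
    by_cases hma : m a = 0
    · obtain ⟨T, hTs, hc, hsum⟩ := ih t (by omega)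
      exact ⟨T, hTs.trans (Finset.subset_insert a s), hc, hsum⟩
    · by_cases hta : t ≤ m a
      · rcases Nat.eq_zero_or_pos t with rfl | htpos
        · exact ⟨∅, by simp, by simp, by simp⟩
        · refine ⟨{a}, by simp, by simp; omega, by simpa using hta⟩
      · obtain ⟨T, hTs, hc, hsum⟩ := ih (t - m a) (by omega)
        have haT : a ∉ T := fun hmem => ha (hTs hmem)
        refine ⟨insert a T, Finset.insert_subset_insert a hTs, ?_, ?_⟩
        · rw [Finset.card_insert_of_notMem haT]; omega
        · rw [Finset.sum_insert haT]; omega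

variable {R : Type*} [CommRing R] [IsDomain R] [IsDedekindDomain R]

lemma span_dvd_span_iff_dvd {a b : R} :
    Ideal.span {a} ∣ Ideal.span ({b} : Set R) ↔ a ∣ b := by
  rw [Ideal.dvd_iff_le, Ideal.span_singleton_le_span_singleton]

omit [IsDomain R] [IsDedekindDomain R] in
lemma span_prod {ι : Type*} (S : Finset ι) (f : ι → R) :
    Ideal.span {∏ j ∈ S, f j} = ∏ j ∈ S, Ideal.span {f j} := by
  classical
  induction S using Finset.induction with
  | empty => simp [Ideal.one_eq_top]
  | @insert a s ha ih =>
    rw [Finset.prod_insert ha, Finset.prod_insert ha, ← ih,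
      Ideal.span_singleton_mul_span_singleton]

lemma nf_prod {ι : Type*} (S : Finset ι) (b : ι → Ideal R) (h : ∀ j ∈ S, b j ≠ 0) :
    normalizedFactors (∏ j ∈ S, b j) = ∑ j ∈ S, normalizedFactors (b j) := by
  classical
  induction S using Finset.induction with
  | empty =>
    rw [Finset.prod_empty, Finset.sum_empty]
    exact normalizedFactors_one
  | @insert a s ha ih =>
    rw [Finset.prod_insert ha, Finset.sum_insert ha,
      normalizedFactors_mul (h a (Finset.mem_insert_self a s))
        (Finset.prod_ne_zero_iff.mpr fun j hj => h j (Finset.mem_insert_of_mem hj)),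
      ih fun j hj => h j (Finset.mem_insert_of_mem hj)]

lemma pow_dvd_iff_le_count [DecidableEq (Ideal R)] {p J : Ideal R} (hp : Prime p)
    (hJ : J ≠ 0) {n : ℕ} :
    p ^ n ∣ J ↔ n ≤ (normalizedFactors J).count p := by
  rw [pow_dvd_iff_le_emultiplicity,
    emultiplicity_eq_count_normalizedFactors hp.irreducible hJ, normalize_eq, Nat.cast_le]

lemma count_prod_pow [DecidableEq (Ideal R)] {k : ℕ} (𝔭 : Fin k → Ideal R)
    (hp : ∀ i, Prime (𝔭 i)) (hdist : Function.Injective 𝔭) (c : Fin k → ℕ) (i : Fin k) :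
    (normalizedFactors (∏ j, 𝔭 j ^ c j)).count (𝔭 i) = c i := by
  rw [nf_prod _ _ fun j _ => pow_ne_zero _ (hp j).ne_zero, Multiset.count_sum']
  have : ∀ j : Fin k, (normalizedFactors (𝔭 j ^ c j)).count (𝔭 i)
      = if i = j then c j else 0 := by
    intro j
    rw [(hp j).irreducible.normalizedFactors_pow, normalize_eq, Multiset.count_replicate]
    rcases eq_or_ne i j with rfl | h
    · simp
    · simp [h, hdist.ne h, (hdist.ne h).symm, Ne.symm h]
  rw [Finset.sum_congr rfl fun j _ => this j]
  simp

/-- A subproduct `∏ 𝔭ᵢ^{cᵢ}` (with `c ≤ t`) of the factorization of an irreducible can only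
be principal if it is trivial or everything. -/
lemma principal_subproduct {x : R} (hx : Irreducible x)
    {k : ℕ} {𝔭 : Fin k → Ideal R} {t : Fin k → ℕ}
    (hprime : ∀ i, (𝔭 i).IsPrime) (hbot : ∀ i, 𝔭 i ≠ ⊥)
    (hdist : Function.Injective 𝔭)
    (hfac : Ideal.span {x} = ∏ i, 𝔭 i ^ t i)
    (c : Fin k → ℕ) (hle : ∀ i, c i ≤ t i)
    (hpr : (∏ i, 𝔭 i ^ c i).IsPrincipal) : (∀ i, c i = 0) ∨ c = t := by
  classical
  have hP : ∀ i, Prime (𝔭 i) := fun i => Ideal.prime_of_isPrime (hbot i) (hprime i)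
  obtain ⟨y, hy⟩ := hpr
  rw [Ideal.submodule_span_eq] at hy
  -- `y ∣ x`
  have hdvdI : (∏ i, 𝔭 i ^ c i) ∣ ∏ i, 𝔭 i ^ t i :=
    Finset.prod_dvd_prod_of_dvd _ _ fun i _ => pow_dvd_pow _ (hle i)
  have hyx : y ∣ x := by
    rw [← span_dvd_span_iff_dvd, ← hy, hfac]
    exact hdvdI
  obtain ⟨z, hz⟩ := hyx
  rcases hx.isUnit_or_isUnit hz with hu | hu
  · -- `y` is a unit, so the product is the whole ring and all `cᵢ = 0`
    left
    intro i
    by_contra hci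
    have htop : (∏ j, 𝔭 j ^ c j) = ⊤ := by
      rw [hy, Ideal.span_singleton_eq_top.mpr hu]
    have h1 : 𝔭 i ^ c i ∣ (⊤ : Ideal R) := htop ▸ Finset.dvd_prod_of_mem _ (Finset.mem_univ i)
    have h2 : (⊤ : Ideal R) ≤ 𝔭 i ^ c i := Ideal.le_of_dvd h1
    have h3 : (⊤ : Ideal R) ≤ 𝔭 i :=
      h2.trans (Ideal.pow_le_self hci)
    exact (hprime i).ne_top (top_le_iff.mp h3)
  · -- `z` is a unit, so the product equals `span {x}` and `c = t`
    right
    have hxy : Ideal.span ({x} : Set R) = Ideal.span {y} := by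
      rw [Ideal.span_singleton_eq_span_singleton, hz]
      exact associated_mul_unit_left y z hu
    have heq : (∏ i, 𝔭 i ^ c i) = ∏ i, 𝔭 i ^ t i := by rw [← hfac, hxy]; exact hy
    funext i
    have := congrArg (fun J => (normalizedFactors J).count (𝔭 i)) heq
    simpa [count_prod_pow 𝔭 hP hdist] using this

/-- A fiber of a sigma type over `Fin k`. -/
def sigmaFiberEquiv' {k : ℕ} (β : Fin k → Type*) (i : Fin k) :
    {σ : Σ j, β j // σ.1 = i} ≃ β i where
  toFun := fun ⟨⟨j, b⟩, h⟩ => h ▸ b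
  invFun := fun b => ⟨⟨i, b⟩, rfl⟩
  left_inv := by rintro ⟨⟨j, b⟩, rfl⟩; rfl
  right_inv := fun b => rfl

/-- Any minimal product-one sequence over a finite group has length at most the cardinality. -/
lemma minimal_seq_length_le {G : Type*} [CommGroup G] [Finite G] {n : ℕ}
    (g : Fin n → G) (hone : ∏ i, g i = 1)
    (hmin : ∀ S : Finset (Fin n), S.Nonempty → S ≠ Finset.univ → ∏ i ∈ S, g i ≠ 1) :
    n ≤ Nat.card G := by
  classical
  by_contra hlt
  push_neg at hlt
  cases nonempty_fintype G
  have hcard : Fintype.card G < Fintype.card (Fin n) := by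
    simpa [Nat.card_eq_fintype_card] using hlt
  set P : Fin n → G := fun j => ∏ l ∈ Finset.Iic j, g l with hP
  obtain ⟨i, j, hne, hPeq⟩ := Fintype.exists_ne_map_eq_of_card_lt P hcard
  wlog hij : i < j generalizing i j
  · exact this j i hne.symm hPeq.symm ((Ne.lt_or_gt hne).resolve_left hij)
  have hunion : Finset.Iic i ∪ Finset.Ioc i j = Finset.Iic j := by
    ext l
    simp only [Finset.mem_union, Finset.mem_Iic, Finset.mem_Ioc]
    constructor
    · rintro (h | ⟨_, h⟩) <;> [exact h.trans hij.le; exact h]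
    · intro h
      rcases le_or_gt l i with h' | h'
      · exact Or.inl h'
      · exact Or.inr ⟨h', h⟩
  have hdisj : Disjoint (Finset.Iic i) (Finset.Ioc i j) := by
    rw [Finset.disjoint_left]
    intro l hl hl'
    exact absurd (Finset.mem_Iic.mp hl) (not_le.mpr (Finset.mem_Ioc.mp hl').1)
  have hprod : P i * ∏ l ∈ Finset.Ioc i j, g l = P j := by
    rw [hP]; rw [← Finset.prod_union hdisj, hunion]
  have h1 : ∏ l ∈ Finset.Ioc i j, g l = 1 := by
    rw [hPeq] at hprod
    exact mul_left_cancel (by rw [hprod, mul_one])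
  refine hmin (Finset.Ioc i j) (Finset.nonempty_Ioc.mpr hij) ?_ h1
  intro huniv
  exact Finset.left_notMem_Ioc (α := Fin n) (huniv ▸ Finset.mem_univ i)

end Aux

open UniqueFactorizationMonoid in
theorem omega_le_davenport
    {R : Type*} [CommRing R] [IsDomain R] [IsDedekindDomain R]
    [Finite (ClassGroup R)]
    (x : R) (hx : Irreducible x)
    (k : ℕ) (𝔭 : Fin k → Ideal R) (t : Fin k → ℕ)
    (hprime : ∀ i, (𝔭 i).IsPrime) (hbot : ∀ i, 𝔭 i ≠ ⊥)
    (hdist : Function.Injective 𝔭) (hpos : ∀ i, 0 < t i)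
    (hfac : Ideal.span {x} = ∏ i, 𝔭 i ^ t i) :
    (∀ (s : ℕ) (a : Fin s → R), (∀ i, Irreducible (a i)) → x ∣ ∏ i, a i →
        ∃ T : Finset (Fin s), T.card ≤ ∑ i, t i ∧ x ∣ ∏ i ∈ T, a i) ∧
      ∑ i, t i ≤ davenportConstant (ClassGroup R) := by
  letI : DecidableEq (Ideal R) := Classical.decEq _
  have hP : ∀ i, Prime (𝔭 i) := fun i => Ideal.prime_of_isPrime (hbot i) (hprime i)
  have hcop : ∀ i j : Fin k, i ≠ j → IsCoprime (𝔭 i ^ t i) (𝔭 j ^ t j) := by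
    intro i j hij
    have hm : ∀ l, (𝔭 l).IsMaximal := fun l => Ideal.IsPrime.isMaximal (hprime l) (hbot l)
    have : IsCoprime (𝔭 i) (𝔭 j) := by
      rw [Ideal.isCoprime_iff_sup_eq]
      exact Ideal.IsMaximal.coprime_of_ne (hm i) (hm j) (fun h => hij (hdist h))
    exact (this.pow : _)
  constructor
  · -- Part 1 : ω(x) ≤ ∑ tᵢ
    intro s a ha hdvd
    have hb0 : ∀ j, Ideal.span {a j} ≠ (0 : Ideal R) := fun j => by
      simp only [Submodule.zero_eq_bot, Ne, Ideal.span_singleton_eq_bot]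
      exact (ha j).ne_zero
    have Hdvd : (∏ i, 𝔭 i ^ t i) ∣ ∏ j, Ideal.span {a j} := by
      rw [← hfac, ← span_prod]
      exact span_dvd_span_iff_dvd.mpr hdvd
    have hcount : ∀ i, t i ≤ ∑ j, (normalizedFactors (Ideal.span {a j})).count (𝔭 i) := by
      intro i
      have h1 : 𝔭 i ^ t i ∣ ∏ j, Ideal.span {a j} :=
        dvd_trans (Finset.dvd_prod_of_mem (fun j => 𝔭 j ^ t j) (Finset.mem_univ i)) Hdvd
      rw [pow_dvd_iff_le_count (hP i) (Finset.prod_ne_zero_iff.mpr fun j _ => hb0 j)] at h1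
      rwa [nf_prod _ _ fun j _ => hb0 j, Multiset.count_sum'] at h1
    choose T hT1 hT2 hT3 using fun i =>
      exists_subset_card_le_sum Finset.univ
        (fun j => (normalizedFactors (Ideal.span {a j})).count (𝔭 i)) (t i) (hcount i)
    refine ⟨Finset.univ.biUnion T,
      le_trans (Finset.card_biUnion_le) (Finset.sum_le_sum fun i _ => hT2 i), ?_⟩
    rw [← span_dvd_span_iff_dvd, hfac, span_prod]
    apply Finset.prod_dvd_of_coprime (fun i _ j _ hij => hcop i j hij)
    intro i _
    rw [pow_dvd_iff_le_count (hP i)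
      (Finset.prod_ne_zero_iff.mpr fun j hj => hb0 j),
      nf_prod _ _ fun j _ => hb0 j, Multiset.count_sum']
    calc t i ≤ ∑ j ∈ T i, (normalizedFactors (Ideal.span {a j})).count (𝔭 i) := hT3 i
      _ ≤ ∑ j ∈ Finset.univ.biUnion T,
            (normalizedFactors (Ideal.span {a j})).count (𝔭 i) :=
        Finset.sum_le_sum_of_subset fun j hj =>
          Finset.mem_biUnion.mpr ⟨i, Finset.mem_univ i, hj⟩
  · -- Part 2 : ∑ tᵢ ≤ D(G)
    have hPne : ∀ i, 𝔭 i ∈ (nonZeroDivisors (Ideal R)) :=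
      fun i => mem_nonZeroDivisors_iff_ne_zero.mpr (by simpa using hbot i)
    set Pz : Fin k → (nonZeroDivisors (Ideal R)) := fun i => ⟨𝔭 i, hPne i⟩ with hPz
    obtain ⟨e⟩ : Nonempty ((Σ i : Fin k, Fin (t i)) ≃ Fin (∑ i, t i)) :=
      ⟨Fintype.equivOfCardEq (by simp)⟩
    set idx : Fin (∑ i, t i) → Fin k := fun j => (e.symm j).1 with hidx
    -- fiber cardinalities
    have hfib : ∀ i, (Finset.univ.filter fun j => idx j = i).card = t i := by
      intro i
      rw [← Fintype.card_subtype]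
      have e2 : {j : Fin (∑ i, t i) // idx j = i} ≃ {σ : Σ i', Fin (t i') // σ.1 = i} :=
        (Equiv.subtypeEquiv e.symm fun j => Iff.rfl)
      rw [Fintype.card_congr e2, Fintype.card_congr (sigmaFiberEquiv' _ i), Fintype.card_fin]
    set g : Fin (∑ i, t i) → ClassGroup R := fun j => ClassGroup.mk0 (Pz (idx j)) with hg
    -- product formula over any S
    have hprodS : ∀ S : Finset (Fin (∑ i, t i)),
        ∏ j ∈ S, g j = ClassGroup.mk0 (∏ i, Pz i ^ (S.filter fun j => idx j = i).card) := by
      intro S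
      rw [map_prod]
      rw [← Finset.prod_fiberwise_of_maps_to (fun j (_ : j ∈ S) => Finset.mem_univ (idx j)) g]
      refine Finset.prod_congr rfl fun i _ => ?_
      rw [map_pow, ← Finset.prod_const]
      refine Finset.prod_congr rfl fun j hj => ?_
      show ClassGroup.mk0 (Pz (idx j)) = ClassGroup.mk0 (Pz i)
      exact congrArg _ (congrArg Pz (Finset.mem_filter.mp hj).2)
    have hcoe : ∀ c : Fin k → ℕ,
        ((∏ i, Pz i ^ c i : (nonZeroDivisors (Ideal R))) : Ideal R) = ∏ i, 𝔭 i ^ c i := by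
      intro c
      push_cast
      rfl
    have hmk_iff : ∀ c : Fin k → ℕ,
        ClassGroup.mk0 (∏ i, Pz i ^ c i) = 1 ↔ (∏ i, 𝔭 i ^ c i).IsPrincipal := by
      intro c
      have hmem2 : (∏ i, 𝔭 i ^ c i) ∈ nonZeroDivisors (Ideal R) :=
        hcoe c ▸ (∏ i, Pz i ^ c i).2
      have heq2 : (∏ i, Pz i ^ c i) = ⟨∏ i, 𝔭 i ^ c i, hmem2⟩ := Subtype.ext (hcoe c)
      rw [heq2]
      exact ClassGroup.mk0_eq_one_iff hmem2
    have hmem : (∑ i, t i) ∈ {n : ℕ | ∃ g : Fin n → ClassGroup R, ∏ i, g i = 1 ∧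
        ∀ S : Finset (Fin n), S.Nonempty → S ≠ Finset.univ → ∏ i ∈ S, g i ≠ 1} := by
      refine ⟨g, ?_, ?_⟩
      · rw [hprodS Finset.univ]
        rw [hmk_iff]
        have huf : ∀ i, ((Finset.univ : Finset (Fin (∑ i, t i))).filter
            fun j => idx j = i).card = t i := hfib
        simp only [huf]
        exact ⟨⟨x, by rw [← hfac]⟩⟩
      · intro S hS hSuniv h1
        set c : Fin k → ℕ := fun i => (S.filter fun j => idx j = i).card with hc
        have hcle : ∀ i, c i ≤ t i := by
          intro i
          rw [hc, ← hfib i]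
          exact Finset.card_le_card (Finset.filter_subset_filter _ (Finset.subset_univ S))
        have hsum : ∑ i, c i = S.card :=
          (Finset.card_eq_sum_card_fiberwise fun j _ => Finset.mem_univ (idx j)).symm
        rw [hprodS S, hmk_iff] at h1
        rcases principal_subproduct hx hprime hbot hdist hfac c hcle h1 with h0 | hct
        · have : S.card = 0 := by rw [← hsum]; simp [h0]
          exact absurd (Finset.card_eq_zero.mp this) (Finset.nonempty_iff_ne_empty.mp hS)
        · have hcard : S.card = ∑ i, t i := by rw [← hsum, hct]
          exact hSuniv (Finset.eq_univ_of_card S (by simpa using hcard))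
    have hbdd : BddAbove {n : ℕ | ∃ g : Fin n → ClassGroup R, ∏ i, g i = 1 ∧
        ∀ S : Finset (Fin n), S.Nonempty → S ≠ Finset.univ → ∏ i ∈ S, g i ≠ 1} := by
      refine ⟨Nat.card (ClassGroup R), ?_⟩
      rintro m ⟨g', h1, h2⟩
      exact minimal_seq_length_le g' h1 h2
    exact le_csSup hbdd hmem
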